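/- For p ∈ (0,1), z ∈ (0,1), R_e > 0 with z < 1 − p, the condition G(0, z, R_e) > 0 > G(1, z, R_e) is equivalent to −ln(1−z)/z < R_e < −((1−p)/z)·ln(1 − z/(1−p)). -/
import Mathlib


theorem stmt_7 (p z Re : ℝ) (hp : p ∈ Set.Ioo (0:ℝ) 1) (hz : z ∈ Set.Ioo (0:ℝ) 1)
    (hRe : 0 < Re) (hzp : z < 1 - p) :
    (p + (1 - p) * Real.exp (-(Re * z / (1 - p))) + z - 1 > 0
      ∧ Real.exp (-(Re * z)) + z - 1 < 0)
    ↔ (-Real.log (1 - z) / z < Re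
        ∧ Re < -((1 - p) / z) * Real.log (1 - z / (1 - p))) := by
  obtain ⟨hp0, hp1⟩ := hp
  obtain ⟨hz0, hz1⟩ := hz
  have h1p : (0:ℝ) < 1 - p := by linarith
  have h1z : (0:ℝ) < 1 - z := by linarith
  have hc : (0:ℝ) < 1 - z / (1 - p) := by
    rw [sub_pos, div_lt_one h1p]; linarith
  have A : (Real.exp (-(Re * z)) + z - 1 < 0) ↔ (-Real.log (1 - z) / z < Re) := by
    rw [div_lt_iff₀ hz0, neg_lt, Real.lt_log_iff_exp_lt h1z]
    constructor <;> intro <;> linarith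
  have B : (p + (1 - p) * Real.exp (-(Re * z / (1 - p))) + z - 1 > 0)
      ↔ (Re < -((1 - p) / z) * Real.log (1 - z / (1 - p))) := by
    have key : (1 - z / (1 - p) < Real.exp (-(Re * z / (1 - p))))
        ↔ (Re < -((1 - p) / z) * Real.log (1 - z / (1 - p))) := by
      rw [← Real.log_lt_iff_lt_exp hc, lt_neg, div_lt_iff₀ h1p,
        show -((1 - p) / z) * Real.log (1 - z / (1 - p))
          = -Real.log (1 - z / (1 - p)) * (1 - p) / z by ring,
        lt_div_iff₀ hz0]
    rw [← key]
    have hd : (1 - z / (1 - p)) * (1 - p) = 1 - p - z := by field_simp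
    constructor <;> intro h
    · nlinarith [hd]
    · nlinarith [mul_lt_mul_of_pos_right h h1p, hd]
  rw [A, B, and_comm]
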